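/- Suppose (x⋆, w⋆, u⋆) satisfies: w⋆ = x⋆ − α∇F(x⋆); x⋆ = prox_{αR}(A(w⋆ − √B u⋆)); and √B(w⋆ − √B u⋆) = 0, where F(x) = Σᵢ fᵢ(xᵢ), R(x) = Σᵢ r(xᵢ), each fᵢ is convex and L-smooth, r is proper closed convex, A = Ā⊗I with Ā𝟙 = 𝟙 symmetric, B = B̄⊗I with B̄ ⪰ 0 and null(B̄) = span(𝟙), and α > 0. Then x⋆ = 𝟙⊗x̄ for some x̄ ∈ ℝ^d satisfying 0 ∈ (1/n)Σᵢ ∇fᵢ(x̄) + ∂r(x̄), i.e., x̄ minimizes (1/n)Σᵢ[fᵢ(x) + r(x)]. -/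

import Mathlib

open Matrix
open RealInnerProductSpace

/-- The positive semidefinite square root (the Mathlib definition of December 2024, since removed). -/
noncomputable def Matrix.PosSemidef.sqrt {n : Type*} [Fintype n] [DecidableEq n]
    {A : Matrix n n ℝ} (hA : A.PosSemidef) : Matrix n n ℝ :=
  hA.1.eigenvectorUnitary.1 * diagonal ((↑) ∘ (fun x => Real.sqrt x) ∘ hA.1.eigenvalues) *
    (star hA.1.eigenvectorUnitary : Matrix n n ℝ)

lemma Matrix.PosSemidef.sqrt_mul_self {n : Type*} [Fintype n] [DecidableEq n]
    {A : Matrix n n ℝ} (hA : A.PosSemidef) : hA.sqrt * hA.sqrt = A := by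
  have hU : (star hA.1.eigenvectorUnitary : Matrix n n ℝ) * hA.1.eigenvectorUnitary.1 = 1 :=
    Unitary.star_mul_self_of_mem hA.1.eigenvectorUnitary.2
  have hD : diagonal ((↑) ∘ (fun x => Real.sqrt x) ∘ hA.1.eigenvalues) *
      diagonal ((↑) ∘ (fun x => Real.sqrt x) ∘ hA.1.eigenvalues)
      = diagonal (RCLike.ofReal ∘ hA.1.eigenvalues : n → ℝ) := by
    rw [diagonal_mul_diagonal]
    congr 1; funext i
    simp [Real.mul_self_sqrt (hA.eigenvalues_nonneg i)]
  conv_rhs => rw [hA.1.spectral_theorem, Unitary.conjStarAlgAut_apply, ← hD]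
  unfold Matrix.PosSemidef.sqrt
  simp only [Matrix.mul_assoc]
  rw [← Matrix.mul_assoc (star _ : Matrix n n ℝ) _ _, hU, Matrix.one_mul]

lemma Matrix.PosSemidef.sqrt_transpose {n : Type*} [Fintype n] [DecidableEq n]
    {A : Matrix n n ℝ} (hA : A.PosSemidef) : hA.sqrtᵀ = hA.sqrt := by
  unfold Matrix.PosSemidef.sqrt
  rw [transpose_mul, transpose_mul, diagonal_transpose, Matrix.mul_assoc]
  have h1 : (star hA.1.eigenvectorUnitary : Matrix n n ℝ)ᵀ = hA.1.eigenvectorUnitary.1 := by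
    simp [Matrix.star_eq_conjTranspose, conjTranspose]
  have h2 : (hA.1.eigenvectorUnitary.1)ᵀ = (star hA.1.eigenvectorUnitary : Matrix n n ℝ) := by
    simp [Matrix.star_eq_conjTranspose, conjTranspose]
  rw [h1, h2]

lemma aux_eps (a b K : ℝ) (hK : 0 ≤ K)
    (h : ∀ t : ℝ, 0 < t → t ≤ 1 → a ≤ b + t * K) : a ≤ b := by
  refine le_of_forall_pos_le_add fun ε hε => ?_
  set t : ℝ := min 1 (ε / (K + 1)) with ht
  have ht0 : 0 < t := lt_min one_pos (div_pos hε (by linarith))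
  have h1 := h t ht0 (min_le_left _ _)
  have h2 : t ≤ ε / (K + 1) := min_le_right _ _
  have hKpos : (0:ℝ) < K + 1 := by linarith
  have h3 : t * (K + 1) ≤ ε := by
    calc t * (K + 1) ≤ (ε / (K + 1)) * (K + 1) :=
          mul_le_mul_of_nonneg_right h2 (by linarith)
    _ = ε := div_mul_cancel₀ _ (by linarith)
  nlinarith [ht0.le]

lemma convex_grad_ineq {E : Type*} [NormedAddCommGroup E] [InnerProductSpace ℝ E] [CompleteSpace E]
    {f : E → ℝ} {G x : E} (hc : ConvexOn ℝ Set.univ f) (hg : HasGradientAt f G x)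
    (y : E) : f x + ⟪G, y - x⟫ ≤ f y := by
  set v := y - x with hv
  -- derivative of t ↦ f (x + t • v) at 0 is ⟪G, v⟫
  have hline : HasDerivAt (fun t : ℝ => x + t • v) v 0 := by
    simpa using ((hasDerivAt_id (0:ℝ)).smul_const v).const_add x
  have hF : HasFDerivAt f (InnerProductSpace.toDual ℝ E G) x := hg.hasFDerivAt
  have hφ : HasDerivAt (fun t : ℝ => f (x + t • v)) ⟪G, v⟫ 0 := by
    have hF' : HasFDerivAt f (InnerProductSpace.toDual ℝ E G) (x + (0:ℝ) • v) := by
      simpa using hF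
    have := hF'.comp_hasDerivAt (0:ℝ)
      (by simpa [add_comm] using hline : HasDerivAt (fun t : ℝ => x + t • v) v 0)
    exact this
  have hslope := hasDerivAt_iff_tendsto_slope.mp hφ
  have hslope' : Filter.Tendsto (slope (fun t : ℝ => f (x + t • v)) 0)
      (nhdsWithin 0 (Set.Ioi 0)) (nhds ⟪G, v⟫) :=
    hslope.mono_left (nhdsWithin_mono _ (fun t ht => ne_of_gt ht))
  have key : ⟪G, v⟫ ≤ f y - f x := by
    refine le_of_tendsto hslope' ?_
    filter_upwards [Ioc_mem_nhdsGT_of_mem (Set.mem_Ico.mpr ⟨le_refl (0:ℝ), one_pos⟩)]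
      with t ht
    obtain ⟨ht0, ht1⟩ := ht
    have hcx : f (x + t • v) ≤ (1 - t) * f x + t * f y := by
      have := hc.2 (Set.mem_univ x) (Set.mem_univ y) (by linarith : (0:ℝ) ≤ 1 - t)
        ht0.le (by ring)
      have heq : (1 - t) • x + t • y = x + t • v := by
        rw [hv]; module
      rwa [heq] at this
    have : slope (fun t : ℝ => f (x + t • v)) 0 t = (f (x + t • v) - f x) / t := by
      simp [slope_def_field]
    rw [this, div_le_iff₀ ht0]
    nlinarith
  linarith

lemma prox_subgrad {E : Type*} [NormedAddCommGroup E] [InnerProductSpace ℝ E]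
    {r : E → ℝ} (hr : ConvexOn ℝ Set.univ r) {α : ℝ} (hα : 0 < α) {x p : E}
    (hmin : IsMinOn (fun s => r s + 1 / (2 * α) * ‖s - x‖ ^ 2) Set.univ p)
    (y : E) : r p + (1 / α) * ⟪x - p, y - p⟫ ≤ r y := by
  set c : ℝ := 1 / (2 * α) with hc
  have hcpos : 0 < c := by positivity
  refine aux_eps _ _ (c * ‖y - p‖ ^ 2) (by positivity) fun t ht0 ht1 => ?_
  have hmin' := hmin (Set.mem_univ (p + t • (y - p)))
  simp only [Set.mem_setOf_eq] at hmin'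
  have hcx : r (p + t • (y - p)) ≤ (1 - t) * r p + t * r y := by
    have := hr.2 (Set.mem_univ p) (Set.mem_univ y) (by linarith : (0:ℝ) ≤ 1 - t)
      ht0.le (by ring)
    have heq : (1 - t) • p + t • y = p + t • (y - p) := by module
    rwa [heq] at this
  have hnorm : ‖p + t • (y - p) - x‖ ^ 2
      = ‖p - x‖ ^ 2 + 2 * t * ⟪p - x, y - p⟫ + t ^ 2 * ‖y - p‖ ^ 2 := by
    have heq : p + t • (y - p) - x = (p - x) + t • (y - p) := by abel
    rw [heq, norm_add_sq_real, real_inner_smul_right, norm_smul]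
    simp [abs_of_pos ht0]
    ring
  have hip : ⟪p - x, y - p⟫ = -⟪x - p, y - p⟫ := by
    rw [← inner_neg_left]; simp
  rw [hnorm] at hmin'
  have h2 : r p + c * ‖p - x‖ ^ 2 ≤ (1 - t) * r p + t * r y
      + c * (‖p - x‖ ^ 2 + 2 * t * ⟪p - x, y - p⟫ + t ^ 2 * ‖y - p‖ ^ 2) := by
    calc r p + c * ‖p - x‖ ^ 2 ≤ _ := hmin'
    _ ≤ _ := by nlinarith [hcx]
  have hca : 2 * c = 1 / α := by rw [hc]; field_simp
  have : t * r p ≤ t * r y + 2 * c * t * ⟪p - x, y - p⟫ + c * t ^ 2 * ‖y - p‖ ^ 2 := by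
    nlinarith [h2]
  have hdiv : r p ≤ r y + 2 * c * ⟪p - x, y - p⟫ + c * t * ‖y - p‖ ^ 2 := by
    nlinarith [this, ht0]
  rw [hip] at hdiv
  rw [← hca]
  linarith [hdiv]

/-- Lemma 1 of FlexATC, fixed-point/KKT characterization. Suppose
`(x⋆, w⋆, u⋆)` satisfies `w⋆ = x⋆ − α∇F(x⋆)`, `x⋆ = prox_{αR}(A(w⋆ − √B u⋆))` and
`√B(w⋆ − √B u⋆) = 0`, where `F(x) = Σᵢ fᵢ(xᵢ)` with each `fᵢ` convex and `L`-smooth,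
`R(x) = Σᵢ r(xᵢ)` with `r` proper closed convex (prox taken blockwise), `A = Ā ⊗ I` with
`Ā` symmetric and `Ā𝟙 = 𝟙`, `B = B̄ ⊗ I` with `B̄ ⪰ 0` and `null(B̄) = span(𝟙)`, and
`α > 0`. Then `x⋆ = 𝟙 ⊗ x̄` for some `x̄` minimizing `(1/n)Σᵢ[fᵢ(x) + r(x)]`. -/
theorem stmt_19 {d n : ℕ}
    (f : Fin n → EuclideanSpace ℝ (Fin d) → ℝ)
    (g : Fin n → EuclideanSpace ℝ (Fin d) → EuclideanSpace ℝ (Fin d))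
    (L : ℝ) (hL : 0 < L)
    (hgrad : ∀ i x, HasGradientAt (f i) (g i x) x)
    (hconv : ∀ i, ConvexOn ℝ Set.univ (f i))
    (hsmooth : ∀ i x y, ‖g i x - g i y‖ ≤ L * ‖x - y‖)
    (r : EuclideanSpace ℝ (Fin d) → ℝ)
    (hrconv : ConvexOn ℝ Set.univ r) (hrlsc : LowerSemicontinuous r)
    (α : ℝ) (hα : 0 < α)
    (prox : EuclideanSpace ℝ (Fin d) → EuclideanSpace ℝ (Fin d))
    (hprox : ∀ x, IsMinOn (fun s => r s + 1 / (2 * α) * ‖s - x‖ ^ 2) Set.univ (prox x))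
    (Abar Bbar : Matrix (Fin n) (Fin n) ℝ)
    (hAsymm : Abarᵀ = Abar)
    (hAone : Abar *ᵥ (1 : Fin n → ℝ) = 1)
    (hB : Bbar.PosSemidef)
    (hnull : ∀ v : Fin n → ℝ, Bbar *ᵥ v = 0 ↔ ∃ t : ℝ, v = t • (1 : Fin n → ℝ))
    (xs ws us zs : Fin n → EuclideanSpace ℝ (Fin d))
    (hws : ws = fun i => xs i - α • g i (xs i))
    (hzs : zs = fun i => ws i - ∑ j, hB.sqrt i j • us j)
    (hxs : xs = fun i => prox (∑ j, Abar i j • zs j))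
    (hfix : (fun i => ∑ j, hB.sqrt i j • zs j) = 0) :
    ∃ xb : EuclideanSpace ℝ (Fin d),
      (∀ i, xs i = xb) ∧
      IsMinOn (fun x => (1 / (n : ℝ)) * ∑ i, (f i x + r x)) Set.univ xb := by
  rcases Nat.eq_zero_or_pos n with hn | hn
  · subst hn
    exact ⟨0, fun i => i.elim0, by simp [isMinOn_iff]⟩
  have sumApply : ∀ (c : Fin n → ℝ) (F : Fin n → EuclideanSpace ℝ (Fin d)) (k : Fin d),
      (∑ j, c j • F j) k = ∑ j, c j * F j k := by
    intro c F k
    simp [WithLp.ofLp_sum, Finset.sum_apply]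
  have hfix' : ∀ i, (∑ j, hB.sqrt i j • zs j) = 0 := fun i => congrFun hfix i
  have hsqz : ∀ k : Fin d, hB.sqrt *ᵥ (fun i => zs i k) = 0 := by
    intro k; funext i
    have h := congrArg (fun z : EuclideanSpace ℝ (Fin d) => z k) (hfix' i)
    simpa [Matrix.mulVec, dotProduct, sumApply] using h
  have hBz : ∀ k, Bbar *ᵥ (fun i => zs i k) = 0 := by
    intro k
    have h : Bbar *ᵥ (fun i => zs i k) = hB.sqrt *ᵥ (hB.sqrt *ᵥ (fun i => zs i k)) := by
      rw [Matrix.mulVec_mulVec, hB.sqrt_mul_self]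
    rw [h, hsqz k, Matrix.mulVec_zero]
  have i0 : Fin n := ⟨0, hn⟩
  have hzc : ∀ i, zs i = zs i0 := by
    intro i; ext k
    obtain ⟨t, ht⟩ := (hnull _).1 (hBz k)
    have h1 := congrFun ht i
    have h2 := congrFun ht i0
    simp only [Pi.smul_apply, Pi.one_apply, smul_eq_mul, mul_one] at h1 h2
    rw [h1, h2]
  set zbar := zs i0 with hzbar
  set xb := prox zbar with hxb
  have hrow : ∀ i, ∑ j, Abar i j = 1 := by
    intro i
    have h := congrFun hAone i
    simpa [Matrix.mulVec, dotProduct] using h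
  have hxsc : ∀ i, xs i = xb := by
    intro i
    have h := congrFun hxs i
    rw [h]
    have h2 : (∑ j, Abar i j • zs j) = ∑ j, Abar i j • zbar :=
      Finset.sum_congr rfl fun j _ => by rw [hzc j]
    rw [h2, ← Finset.sum_smul, hrow i, one_smul]
  -- sqrt B annihilates ones
  have hsqrt_symm : hB.sqrtᵀ = hB.sqrt := by
    exact hB.sqrt_transpose
  have hB1 : Bbar *ᵥ (1 : Fin n → ℝ) = 0 := (hnull 1).2 ⟨1, (one_smul ℝ _).symm⟩
  have hs1 : hB.sqrt *ᵥ (1 : Fin n → ℝ) = 0 := by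
    set y := hB.sqrt *ᵥ (1 : Fin n → ℝ) with hy
    have hyy : y ⬝ᵥ y = 0 := by
      calc y ⬝ᵥ y = (y ᵥ* hB.sqrt) ⬝ᵥ 1 := dotProduct_mulVec _ _ _
      _ = (hB.sqrtᵀ *ᵥ y) ⬝ᵥ 1 := by rw [← Matrix.mulVec_transpose]
      _ = (Bbar *ᵥ 1) ⬝ᵥ 1 := by
          rw [hsqrt_symm, hy, Matrix.mulVec_mulVec, hB.sqrt_mul_self]
      _ = 0 := by rw [hB1, zero_dotProduct]
    exact dotProduct_self_eq_zero.mp hyy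
  have hentry : ∀ i j, hB.sqrt i j = hB.sqrt j i := by
    intro i j
    conv_lhs => rw [← hsqrt_symm]
    exact Matrix.transpose_apply _ _ _
  have hcol : ∀ j, ∑ i, hB.sqrt i j = 0 := by
    intro j
    have h := congrFun hs1 j
    simp only [Matrix.mulVec, dotProduct, Pi.one_apply, mul_one, Pi.zero_apply] at h
    calc ∑ i, hB.sqrt i j = ∑ i, hB.sqrt j i := Finset.sum_congr rfl fun i _ => hentry i j
    _ = 0 := h
  -- sum identities
  have hsumz : (∑ i, zs i) = (n : ℝ) • zbar := by
    rw [Finset.sum_congr rfl fun i _ => hzc i]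
    simp [Finset.sum_const, Finset.card_univ, ← Nat.cast_smul_eq_nsmul ℝ]
  have hsumBu : (∑ i, ∑ j, hB.sqrt i j • us j) = (0 : EuclideanSpace ℝ (Fin d)) := by
    rw [Finset.sum_comm]
    have h : ∀ j : Fin n, (∑ i, hB.sqrt i j • us j) = (∑ i, hB.sqrt i j) • us j :=
      fun j => (Finset.sum_smul).symm
    rw [Finset.sum_congr rfl fun j _ => h j]
    simp [hcol]
  set Gv := ∑ i, g i xb with hGv
  have hsumw : (∑ i, ws i) = (n : ℝ) • xb - α • Gv := by
    rw [hws]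
    have h : ∀ i : Fin n, xs i - α • g i (xs i) = xb - α • g i xb := by
      intro i; rw [hxsc i]
    rw [Finset.sum_congr rfl fun i _ => h i, Finset.sum_sub_distrib, ← Finset.smul_sum]
    simp [Finset.sum_const, Finset.card_univ, ← Nat.cast_smul_eq_nsmul ℝ, hGv]
  have hkey : (n : ℝ) • (xb - zbar) = α • Gv := by
    have h1 : (∑ i, zs i) = (∑ i, ws i) - ∑ i, ∑ j, hB.sqrt i j • us j := by
      rw [hzs, Finset.sum_sub_distrib]
    rw [hsumz, hsumw, hsumBu, sub_zero] at h1
    rw [smul_sub]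
    rw [h1]
    abel
  refine ⟨xb, hxsc, ?_⟩
  rw [isMinOn_iff]
  intro y _
  have hn' : (0 : ℝ) < n := by exact_mod_cast hn
  have hsplit : ∀ x : EuclideanSpace ℝ (Fin d),
      (∑ i, (f i x + r x)) = (∑ i, f i x) + n * r x := by
    intro x
    rw [Finset.sum_add_distrib, Finset.sum_const, Finset.card_univ]
    simp [nsmul_eq_mul]
  simp only [hsplit]
  have hfineq : (∑ i, f i xb) + ⟪Gv, y - xb⟫ ≤ ∑ i, f i y := by
    have hinner : ⟪Gv, y - xb⟫ = ∑ i, ⟪g i xb, y - xb⟫ := by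
      rw [hGv, sum_inner]
    rw [hinner, ← Finset.sum_add_distrib]
    exact Finset.sum_le_sum fun i _ => convex_grad_ineq (hconv i) (hgrad i xb) y
  have hrineq : r xb + (1 / α) * ⟪zbar - xb, y - xb⟫ ≤ r y :=
    prox_subgrad hrconv hα (hprox zbar) y
  have hinn : (n : ℝ) * ⟪xb - zbar, y - xb⟫ = α * ⟪Gv, y - xb⟫ := by
    have h := congrArg (fun w : EuclideanSpace ℝ (Fin d) => ⟪w, y - xb⟫) hkey
    simp only [real_inner_smul_left] at h
    exact h
  have e1 : ⟪xb - zbar, y - xb⟫ = -⟪zbar - xb, y - xb⟫ := by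
    rw [← inner_neg_left]; simp
  rw [e1] at hinn
  have h5 : (n : ℝ) * (r xb + (1 / α) * ⟪zbar - xb, y - xb⟫) ≤ (n : ℝ) * r y :=
    mul_le_mul_of_nonneg_left hrineq hn'.le
  have hA0 : α ≠ 0 := ne_of_gt hα
  have h6 : (n : ℝ) * ((1 / α) * ⟪zbar - xb, y - xb⟫) = -⟪Gv, y - xb⟫ := by
    have h7 : (n : ℝ) * ⟪zbar - xb, y - xb⟫ = -(α * ⟪Gv, y - xb⟫) := by linarith [hinn]
    calc (n : ℝ) * ((1 / α) * ⟪zbar - xb, y - xb⟫)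
        = (1 / α) * ((n : ℝ) * ⟪zbar - xb, y - xb⟫) := by ring
    _ = (1 / α) * (-(α * ⟪Gv, y - xb⟫)) := by rw [h7]
    _ = -(((1 / α) * α) * ⟪Gv, y - xb⟫) := by ring
    _ = -⟪Gv, y - xb⟫ := by rw [one_div_mul_cancel hA0, one_mul]
  have hexp : (n : ℝ) * (r xb + (1 / α) * ⟪zbar - xb, y - xb⟫)
      = (n : ℝ) * r xb + (n : ℝ) * ((1 / α) * ⟪zbar - xb, y - xb⟫) := by ring
  have hfinal : (∑ i, f i xb) + n * r xb ≤ (∑ i, f i y) + n * r y := by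
    linarith [hfineq, h5, h6, hexp]
  exact mul_le_mul_of_nonneg_left hfinal (by positivity)
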